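/- arXiv:1903.09225 — 2 statements merged into one kernel-verified Lean document; each statement's English description precedes it below -/
import Mathlib

section
/- If an m × n integer matrix P has trivial cokernel (the rows generate ℤ^n), then m ≥ n and there exists a reordering and sign change of the rows and a sequence of additions of one row to another after which the first n rows form the identity matrix and the remaining rows are zero. -/
/-- A row move: permuting rows, negating a row, or adding one row to another. -/
def RowMove {m n : ℕ} (P Q : Matrix (Fin m) (Fin n) ℤ) : Prop :=
  (∃ σ : Equiv.Perm (Fin m), Q = P.submatrix σ id) ∨
  (∃ i : Fin m, Q = Matrix.updateRow P i (-(P i))) ∨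
  (∃ i j : Fin m, i ≠ j ∧ Q = Matrix.updateRow P i (P i + P j))

namespace RM

variable {m n : ℕ}

abbrev R {m n : ℕ} : Matrix (Fin m) (Fin n) ℤ → Matrix (Fin m) (Fin n) ℤ → Prop :=
  Relation.ReflTransGen RowMove

lemma movePerm (P : Matrix (Fin m) (Fin n) ℤ) (σ : Equiv.Perm (Fin m)) :
    R P (P.submatrix σ id) := Relation.ReflTransGen.single (Or.inl ⟨σ, rfl⟩)

lemma moveNeg (P : Matrix (Fin m) (Fin n) ℤ) (i : Fin m) :
    R P (P.updateRow i (-(P i))) := Relation.ReflTransGen.single (Or.inr (Or.inl ⟨i, rfl⟩))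

lemma moveAdd (P : Matrix (Fin m) (Fin n) ℤ) (i j : Fin m) (h : i ≠ j) :
    R P (P.updateRow i (P i + P j)) :=
  Relation.ReflTransGen.single (Or.inr (Or.inr ⟨i, j, h, rfl⟩))

lemma updateRow_rows (P : Matrix (Fin m) (Fin n) ℤ) (i : Fin m) (x : Fin n → ℤ) :
    ∀ k, (P.updateRow i x) k = if k = i then x else P k := by
  intro k
  by_cases h : k = i <;> simp [h, Matrix.updateRow_apply]

lemma moveAddNat (P : Matrix (Fin m) (Fin n) ℤ) (i j : Fin m) (h : i ≠ j) (k : ℕ) :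
    R P (P.updateRow i (P i + (k : ℤ) • P j)) := by
  induction k with
  | zero => simpa using Relation.ReflTransGen.refl
  | succ k ih =>
      refine ih.trans ?_
      set Q := P.updateRow i (P i + (k : ℤ) • P j) with hQ
      have h1 : Q i = P i + (k : ℤ) • P j := by simp [hQ]
      have h2 : Q j = P j := by simp [hQ, Matrix.updateRow_apply, h.symm]
      have := moveAdd Q i j h
      have e : Q.updateRow i (Q i + Q j) = P.updateRow i (P i + ((k + 1 : ℕ) : ℤ) • P j) := by
        rw [h1, h2, hQ]
        ext a b
        by_cases ha : a = i <;> simp [ha, Matrix.updateRow_apply]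
        ring
      rwa [e] at this

lemma moveAddMul (P : Matrix (Fin m) (Fin n) ℤ) (i j : Fin m) (h : i ≠ j) (c : ℤ) :
    R P (P.updateRow i (P i + c • P j)) := by
  rcases le_or_gt 0 c with hc | hc
  · obtain ⟨k, rfl⟩ := Int.eq_ofNat_of_zero_le hc
    exact moveAddNat P i j h k
  · have h1 := moveNeg P i
    set P1 := P.updateRow i (-(P i)) with hP1
    have h2 := moveAddNat P1 i j h (-c).toNat
    set P2 := P1.updateRow i (P1 i + ((-c).toNat : ℤ) • P1 j) with hP2
    have h3 := moveNeg P2 i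
    have e : P2.updateRow i (-(P2 i)) = P.updateRow i (P i + c • P j) := by
      have hc' : ((-c).toNat : ℤ) = -c := Int.toNat_of_nonneg (by omega)
      ext a b
      by_cases ha : a = i <;>
        simp [ha, hP2, hP1, Matrix.updateRow_apply, h.symm, hc']
      ring
    exact (h1.trans h2).trans (by rwa [e] at h3)

/-- the span of the rows -/
def spanRows (P : Matrix (Fin m) (Fin n) ℤ) : Submodule ℤ (Fin n → ℤ) :=
  Submodule.span ℤ (Set.range fun i => P i)

lemma spanRows_le {P Q : Matrix (Fin m) (Fin n) ℤ}
    (h : ∀ i, Q i ∈ spanRows P) : spanRows Q ≤ spanRows P := by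
  rw [spanRows, Submodule.span_le]
  rintro _ ⟨i, rfl⟩; exact h i

lemma row_mem_spanRows (P : Matrix (Fin m) (Fin n) ℤ) (i : Fin m) : P i ∈ spanRows P :=
  Submodule.subset_span ⟨i, rfl⟩

lemma rowMove_spanRows {P Q : Matrix (Fin m) (Fin n) ℤ} (h : RowMove P Q) :
    spanRows Q = spanRows P := by
  rcases h with ⟨σ, rfl⟩ | ⟨i, rfl⟩ | ⟨i, j, hij, rfl⟩
  · apply le_antisymm
    · exact spanRows_le fun k => row_mem_spanRows P (σ k)
    · refine spanRows_le fun k => ?_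
      have e : P k = P.submatrix σ id (σ.symm k) := by funext j; simp
      rw [e]; exact row_mem_spanRows _ _
  · apply le_antisymm
    · refine spanRows_le fun k => ?_
      rw [updateRow_rows]
      split
      · exact neg_mem (row_mem_spanRows P i)
      · exact row_mem_spanRows P k
    · refine spanRows_le fun k => ?_
      by_cases hk : k = i
      · subst hk
        set Q := P.updateRow k (-(P k)) with hQ
        have e : P k = -(Q k) := by simp [hQ]
        rw [e]
        exact neg_mem (row_mem_spanRows _ k)
      · have : P k = (P.updateRow i (-(P i))) k := by simp [Matrix.updateRow_apply, hk]
        rw [this]; exact row_mem_spanRows _ k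
  · apply le_antisymm
    · refine spanRows_le fun k => ?_
      rw [updateRow_rows]
      split
      · exact add_mem (row_mem_spanRows P i) (row_mem_spanRows P j)
      · exact row_mem_spanRows P k
    · refine spanRows_le fun k => ?_
      by_cases hk : k = i
      · subst hk
        set Q := P.updateRow k (P k + P j) with hQ
        have : P k = Q k - Q j := by simp [hQ, Matrix.updateRow_apply, hij.symm]
        rw [this]
        exact sub_mem (row_mem_spanRows _ k) (row_mem_spanRows _ j)
      · have : P k = (P.updateRow i (P i + P j)) k := by simp [Matrix.updateRow_apply, hk]
        rw [this]; exact row_mem_spanRows _ k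

lemma R_spanRows {P Q : Matrix (Fin m) (Fin n) ℤ} (h : R P Q) :
    spanRows Q = spanRows P := by
  induction h with
  | refl => rfl
  | tail _ h ih => rw [rowMove_spanRows h, ih]


theorem natAbs_emod_lt' (a b : ℤ) (hb : b ≠ 0) : (a % b).natAbs < b.natAbs := by
  have h1 : 0 ≤ a % b := Int.emod_nonneg a hb
  have h2 : a % |b| < |b| := Int.emod_lt_of_pos a (abs_pos.mpr hb)
  have h3 : a % |b| = a % b := by
    rcases abs_cases b with ⟨h, _⟩ | ⟨h, _⟩
    · rw [h]
    · rw [h, Int.emod_neg]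
  have h5 : |b| = (b.natAbs : ℤ) := Int.abs_eq_natAbs b
  rw [h3, h5] at h2
  omega

/-- the target matrix -/
def Tgt (m n : ℕ) : Matrix (Fin m) (Fin n) ℤ := fun i j => if (i : ℕ) = (j : ℕ) then 1 else 0

/-- adjoin a fixed first row, and a zero first column -/
def lift (r : Fin (n + 1) → ℤ) (B : Matrix (Fin m) (Fin n) ℤ) :
    Matrix (Fin (m + 1)) (Fin (n + 1)) ℤ :=
  Matrix.of (Fin.cons r fun i => Fin.cons 0 (B i))

@[simp] lemma lift_zero (r : Fin (n + 1) → ℤ) (B : Matrix (Fin m) (Fin n) ℤ) :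
    lift r B 0 = r := rfl

@[simp] lemma lift_succ (r : Fin (n + 1) → ℤ) (B : Matrix (Fin m) (Fin n) ℤ) (i : Fin m) :
    lift r B i.succ = Fin.cons 0 (B i) := by
  funext b; simp [lift]

lemma rowMove_lift (r : Fin (n + 1) → ℤ) {B C : Matrix (Fin m) (Fin n) ℤ}
    (h : RowMove B C) : RowMove (lift r B) (lift r C) := by
  rcases h with ⟨σ, rfl⟩ | ⟨i, rfl⟩ | ⟨i, j, hij, rfl⟩
  · refine Or.inl ⟨Equiv.Perm.decomposeFin.symm (0, σ), ?_⟩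
    ext a b
    refine Fin.cases ?_ (fun a' => ?_) a
    · simp
    · have e : B.submatrix σ id a' = B (σ a') := rfl
      simp [Equiv.Perm.decomposeFin_symm_apply_succ, e]
  · refine Or.inr (Or.inl ⟨i.succ, ?_⟩)
    ext a b
    refine Fin.cases ?_ (fun a' => ?_) a
    · simp [Matrix.updateRow_apply, (Fin.succ_ne_zero i).symm]
    · by_cases ha : a' = i
      · subst ha
        refine Fin.cases ?_ (fun b' => ?_) b <;> simp
      · simp [Matrix.updateRow_apply, ha, fun h => ha (Fin.succ_injective _ h)]
  · refine Or.inr (Or.inr ⟨i.succ, j.succ, fun h => hij (Fin.succ_injective _ h), ?_⟩)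
    ext a b
    refine Fin.cases ?_ (fun a' => ?_) a
    · simp [Matrix.updateRow_apply, (Fin.succ_ne_zero i).symm]
    · by_cases ha : a' = i
      · subst ha
        refine Fin.cases ?_ (fun b' => ?_) b <;> simp
      · simp [Matrix.updateRow_apply, ha, fun h => ha (Fin.succ_injective _ h)]

lemma R_lift (r : Fin (n + 1) → ℤ) {B C : Matrix (Fin m) (Fin n) ℤ}
    (h : R B C) : R (lift r B) (lift r C) :=
  Relation.ReflTransGen.lift (lift r) (fun _ _ => rowMove_lift r) B C h

lemma lift_eq_Tgt {v : Fin (n + 1) → ℤ} (hv0 : v 0 = 1)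
    (hv : ∀ j' : Fin n, v j'.succ = 0) : lift v (Tgt m n) = Tgt (m + 1) (n + 1) := by
  ext a b
  refine Fin.cases ?_ (fun a' => ?_) a <;> refine Fin.cases ?_ (fun b' => ?_) b
  · simpa [Tgt] using hv0
  · simpa [Tgt] using hv b'
  · simp [Tgt, (Fin.succ_ne_zero a').symm]
  · simp [Tgt]

lemma clear (hnm : n ≤ m) : ∀ (t : ℕ) (v : Fin (n + 1) → ℤ), v 0 = 1 →
    (∀ j' : Fin n, t ≤ (j' : ℕ) → v j'.succ = 0) →
    R (lift v (Tgt m n)) (Tgt (m + 1) (n + 1)) := by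
  intro t
  induction t with
  | zero =>
      intro v hv0 hv
      rw [lift_eq_Tgt hv0 (fun j' => hv j' (Nat.zero_le _))]
  | succ t ih =>
      intro v hv0 hv
      by_cases ht : t < n
      · set jt : Fin n := ⟨t, ht⟩ with hjt
        set i : Fin (m + 1) := (Fin.castLE hnm jt).succ with hi
        set c : ℤ := -(v jt.succ) with hc
        set M := lift v (Tgt m n) with hM
        have hmove := moveAddMul M 0 i (Fin.succ_ne_zero _).symm c
        set v' : Fin (n + 1) → ℤ := Function.update v jt.succ 0 with hv'
        have heq : M.updateRow 0 (M 0 + c • M i) = lift v' (Tgt m n) := by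
          ext a b
          refine Fin.cases ?_ (fun a' => ?_) a
          · rw [Matrix.updateRow_self]
            have hM0 : M 0 = v := rfl
            have hMi : M i = Fin.cons 0 (Tgt m n (Fin.castLE hnm jt)) := lift_succ _ _ _
            rw [hM0, hMi]
            refine Fin.cases ?_ (fun b' => ?_) b
            · simp [hv', Function.update_of_ne (Fin.succ_ne_zero jt).symm]
            · simp only [Pi.add_apply, Pi.smul_apply, Fin.cons_succ, smul_eq_mul]
              by_cases hb : b' = jt
              · subst hb
                simp [Tgt, hc, hv']
              · have hbt : (t : ℕ) ≠ (b' : ℕ) := fun h => hb (Fin.ext (by simp [hjt, ← h]))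
                have : v' b'.succ = v b'.succ := by
                  refine Function.update_of_ne (fun h => hb (Fin.succ_injective _ h)) _ _
                simp [Tgt, hbt, this, hjt]
          · rw [Matrix.updateRow_ne (Fin.succ_ne_zero a')]
            have h1 : M a'.succ = Fin.cons 0 (Tgt m n a') := lift_succ _ _ _
            have h2 : lift v' (Tgt m n) a'.succ = Fin.cons 0 (Tgt m n a') := lift_succ _ _ _
            rw [h1, h2]
        rw [heq] at hmove
        refine hmove.trans (ih v' ?_ ?_)
        · rw [hv', Function.update_of_ne (Fin.succ_ne_zero jt).symm, hv0]
        · intro j' hj'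
          by_cases hjj : j' = jt
          · subst hjj
            simp [hv']
          · have : v' j'.succ = v j'.succ :=
              Function.update_of_ne (fun h => hjj (Fin.succ_injective _ h)) _ _
            rw [this]
            refine hv j' ?_
            have : (j' : ℕ) ≠ t := fun h => hjj (Fin.ext (by simp [hjt, h]))
            omega
      · exact ih v hv0 (fun j' hj' => hv j' (by omega))

lemma col_one (P : Matrix (Fin m) (Fin (n + 1)) ℤ) (hP : spanRows P = ⊤) :
    ∃ c : Fin m → ℤ, ∑ i, c i * P i 0 = 1 := by
  have h1 : (Pi.single (0 : Fin (n + 1)) (1 : ℤ)) ∈ spanRows P := by rw [hP]; trivial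
  rw [spanRows, Submodule.mem_span_range_iff_exists_fun] at h1
  obtain ⟨c, hc⟩ := h1
  refine ⟨c, ?_⟩
  have h2 := congrFun hc 0
  simpa [Finset.sum_apply] using h2

lemma euclid : ∀ (N : ℕ) (P : Matrix (Fin (m + 1)) (Fin (n + 1)) ℤ),
    (∑ i, (P i 0).natAbs ≤ N) → spanRows P = ⊤ →
    ∃ Q, R P Q ∧ Q 0 0 = 1 ∧ ∀ i, i ≠ 0 → Q i 0 = 0 := by
  intro N
  induction N with
  | zero =>
      intro P hsum hspan
      exfalso
      obtain ⟨c, hc⟩ := col_one P hspan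
      have hz : ∀ i, P i 0 = 0 := by
        intro i
        have h1 : (P i 0).natAbs ≤ ∑ k, (P k 0).natAbs :=
          Finset.single_le_sum (f := fun k => (P k 0).natAbs)
            (fun i _ => Nat.zero_le _) (Finset.mem_univ i)
        omega
      rw [Finset.sum_congr rfl (fun i _ => by rw [hz i, mul_zero])] at hc
      simp at hc
  | succ N ih =>
      intro P hsum hspan
      obtain ⟨c, hc⟩ := col_one P hspan
      by_cases hone : ∃ i₀, ∀ i, i ≠ i₀ → P i 0 = 0
      · obtain ⟨i₀, h0⟩ := hone
        have hunit : P i₀ 0 = 1 ∨ P i₀ 0 = -1 := by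
          have h1 : (∑ k, c k * P k 0) = c i₀ * P i₀ 0 :=
            Finset.sum_eq_single i₀ (fun b _ hb => by rw [h0 b hb, mul_zero]) (by simp)
          rw [h1] at hc
          have hdvd : P i₀ 0 ∣ 1 := ⟨c i₀, by rw [mul_comm]; exact hc.symm⟩
          exact Int.isUnit_iff.mp (isUnit_of_dvd_one hdvd)
        obtain ⟨Q₁, hRQ₁, hQ₁a, hQ₁b⟩ :
            ∃ Q₁, R P Q₁ ∧ Q₁ i₀ 0 = 1 ∧ ∀ i, i ≠ i₀ → Q₁ i 0 = 0 := by
          rcases hunit with h | h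
          · exact ⟨P, Relation.ReflTransGen.refl, h, h0⟩
          · refine ⟨P.updateRow i₀ (-(P i₀)), moveNeg P i₀, ?_, ?_⟩
            · simp [h]
            · intro i hi; rw [Matrix.updateRow_ne hi]; exact h0 i hi
        refine ⟨Q₁.submatrix (Equiv.swap 0 i₀) id, hRQ₁.trans (movePerm Q₁ _), ?_, ?_⟩
        · simpa [Matrix.submatrix_apply, Equiv.swap_apply_left] using hQ₁a
        · intro i hi
          have hne : Equiv.swap 0 i₀ i ≠ i₀ := by
            intro h
            have h2 := congrArg (Equiv.swap 0 i₀) h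
            rw [Equiv.swap_apply_self, Equiv.swap_apply_right] at h2
            exact hi h2
          simpa [Matrix.submatrix_apply] using hQ₁b _ hne
      · push_neg at hone
        have hSne : (Finset.univ.filter fun i => P i 0 ≠ 0).Nonempty := by
          by_contra hS
          rw [Finset.not_nonempty_iff_eq_empty, Finset.filter_eq_empty_iff] at hS
          push_neg at hS
          rw [Finset.sum_congr rfl (fun i _ => by rw [hS (Finset.mem_univ i), mul_zero])] at hc
          simp at hc
        obtain ⟨j, hjmem, hjmin⟩ :=
          Finset.exists_min_image _ (fun i => (P i 0).natAbs) hSne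
        have hj0 : P j 0 ≠ 0 := (Finset.mem_filter.mp hjmem).2
        obtain ⟨i, hij, hi0⟩ := hone j
        have himem : i ∈ Finset.univ.filter fun i => P i 0 ≠ 0 :=
          Finset.mem_filter.mpr ⟨Finset.mem_univ _, hi0⟩
        have hmin := hjmin i himem
        set q : ℤ := P i 0 / P j 0 with hq
        have hmove := moveAddMul P i j hij (-q)
        set P' := P.updateRow i (P i + (-q) • P j) with hP'
        have hPi' : P' i 0 = P i 0 % P j 0 := by
          rw [hP', Matrix.updateRow_self]
          simp only [Pi.add_apply, Pi.smul_apply, smul_eq_mul]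
          rw [Int.emod_def, hq]; ring
        have hother : ∀ k, k ≠ i → P' k 0 = P k 0 := fun k hk => by
          rw [hP', Matrix.updateRow_ne hk]
        have hsum' : ∑ k, (P' k 0).natAbs ≤ N := by
          have hlt : (P' i 0).natAbs < (P i 0).natAbs := by
            rw [hPi']; exact lt_of_lt_of_le (natAbs_emod_lt' _ _ hj0) hmin
          have e1 : ∑ k ∈ Finset.univ.erase i, (P' k 0).natAbs + (P' i 0).natAbs
              = ∑ k, (P' k 0).natAbs := Finset.sum_erase_add _ _ (Finset.mem_univ i)
          have e2 : ∑ k ∈ Finset.univ.erase i, (P k 0).natAbs + (P i 0).natAbs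
              = ∑ k, (P k 0).natAbs := Finset.sum_erase_add _ _ (Finset.mem_univ i)
          have e3 : ∑ k ∈ Finset.univ.erase i, (P' k 0).natAbs
              = ∑ k ∈ Finset.univ.erase i, (P k 0).natAbs :=
            Finset.sum_congr rfl (fun k hk => by
              rw [hother k (Finset.ne_of_mem_erase hk)])
          omega
        have hspan' : spanRows P' = ⊤ := by rw [R_spanRows hmove, hspan]
        obtain ⟨Q, hQ, h1, h2⟩ := ih P' hsum' hspan'
        exact ⟨Q, hmove.trans hQ, h1, h2⟩

lemma main : ∀ (n m : ℕ) (P : Matrix (Fin m) (Fin n) ℤ),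
    spanRows P = ⊤ → n ≤ m ∧ R P (Tgt m n) := by
  intro n
  induction n with
  | zero =>
      intro m P _
      refine ⟨Nat.zero_le _, ?_⟩
      have h : P = Tgt m 0 := by
        ext i j
        exact absurd j.2 (Nat.not_lt_zero _)
      rw [h]
  | succ n ih =>
      intro m P hP
      match m with
      | 0 =>
          exfalso
          have h1 : (fun _ => (1 : ℤ)) ∈ spanRows P := by rw [hP]; trivial
          rw [spanRows] at h1
          have he : (Set.range fun i : Fin 0 => P i) = ∅ := Set.range_eq_empty _
          rw [he, Submodule.span_empty, Submodule.mem_bot] at h1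
          exact one_ne_zero (congrFun h1 0)
      | m + 1 =>
          obtain ⟨Q, hPQ, hQ00, hQcol⟩ := euclid (∑ i, (P i 0).natAbs) P le_rfl hP
          have hspanQ : spanRows Q = ⊤ := by rw [R_spanRows hPQ, hP]
          set B : Matrix (Fin m) (Fin n) ℤ := Matrix.of fun i j => Q i.succ j.succ with hB
          have hQlift : Q = lift (Q 0) B := by
            ext a b
            refine Fin.cases ?_ (fun a' => ?_) a
            · rfl
            · rw [lift_succ]
              refine Fin.cases ?_ (fun b' => ?_) b
              · rw [Fin.cons_zero]
                exact hQcol a'.succ (Fin.succ_ne_zero a')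
              · rw [Fin.cons_succ]
                rfl
          have hspanB : spanRows B = ⊤ := by
            rw [eq_top_iff]
            rintro w -
            have hw : Fin.cons 0 w ∈ spanRows Q := by rw [hspanQ]; trivial
            rw [spanRows, Submodule.mem_span_range_iff_exists_fun] at hw
            obtain ⟨c, hc⟩ := hw
            have hc0 : c 0 = 0 := by
              have h2 := congrFun hc 0
              have h2' : (∑ i, c i * Q i 0) = 0 := by
                simpa [Finset.sum_apply] using h2
              have h3 : (∑ i, c i * Q i 0) = c 0 * Q 0 0 :=
                Finset.sum_eq_single 0 (fun b _ hb => by rw [hQcol b hb, mul_zero]) (by simp)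
              rw [h3, hQ00, mul_one] at h2'
              exact h2'
            rw [spanRows, Submodule.mem_span_range_iff_exists_fun]
            refine ⟨fun i => c i.succ, ?_⟩
            funext j'
            have h4 := congrFun hc j'.succ
            simp only [Finset.sum_apply, Pi.smul_apply, smul_eq_mul, Fin.cons_succ] at h4 ⊢
            rw [Fin.sum_univ_succ, hc0, zero_mul, zero_add] at h4
            exact h4
          obtain ⟨hnm, hRB⟩ := ih m B hspanB
          refine ⟨Nat.succ_le_succ hnm, ?_⟩
          have l1 : R Q (lift (Q 0) (Tgt m n)) := by
            rw [hQlift]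
            exact R_lift _ hRB
          have l2 := clear hnm n (Q 0) hQ00 (fun j' hj' => absurd j'.2 (by omega))
          exact (hPQ.trans l1).trans l2

end RM

/-- If the rows of the `m × n` integer matrix `P` generate `ℤⁿ`, then `m ≥ n` and
by reordering/negating rows and adding rows to one another `P` can be transformed into
the matrix whose first `n` rows form the identity and whose remaining rows are zero. -/
theorem stmt_3 {m n : ℕ} (P : Matrix (Fin m) (Fin n) ℤ)
    (hP : Submodule.span ℤ (Set.range fun i : Fin m => P i) = ⊤) :
    n ≤ m ∧
    Relation.ReflTransGen RowMove P
      (fun i j => if (i : ℕ) = (j : ℕ) then 1 else 0) := by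
  obtain ⟨h1, h2⟩ := RM.main n m P hP
  exact ⟨h1, h2⟩
end

section
/- Let A be a free abelian group of rank n with basis a_1, …, a_n, and let b_1, …, b_m ∈ A be elements such that A / ⟨b_1,…,b_m⟩ = 0. Then there exist elements b_1', …, b_m' obtained from b_1,…,b_m by a sequence of swaps, negations, and operations b_i ↦ b_i ± b_j (i ≠ j), such that b_i' = a_i for i ≤ n and b_i' = 0 for i > n. -/
/-- A handle-slide move on a tuple of elements of an abelian group: swapping two
entries, negating an entry, or replacing `bᵢ` by `bᵢ ± bⱼ` for `i ≠ j`. -/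
def TupleMove {m : ℕ} {A : Type*} [AddCommGroup A] (b b' : Fin m → A) : Prop :=
  (∃ i j : Fin m, b' = b ∘ Equiv.swap i j) ∨
  (∃ i : Fin m, b' = Function.update b i (-(b i))) ∨
  (∃ i j : Fin m, i ≠ j ∧
    (b' = Function.update b i (b i + b j) ∨ b' = Function.update b i (b i - b j)))

namespace TM
set_option linter.unusedSectionVars false
set_option linter.unusedTactic false
set_option maxHeartbeats 1000000
variable {m : ℕ} {A : Type*} [AddCommGroup A]



lemma closure_le_of_forall {b b' : Fin m → A}
    (h : ∀ r, b' r ∈ AddSubgroup.closure (Set.range b)) :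
    AddSubgroup.closure (Set.range b') ≤ AddSubgroup.closure (Set.range b) :=
  (AddSubgroup.closure_le _).2 (Set.range_subset_iff.2 h)

lemma mem_cl (b : Fin m → A) (r : Fin m) : b r ∈ AddSubgroup.closure (Set.range b) :=
  AddSubgroup.subset_closure ⟨r, rfl⟩

lemma closure_move {b b' : Fin m → A} (h : TupleMove b b') :
    AddSubgroup.closure (Set.range b') = AddSubgroup.closure (Set.range b) := by
  obtain ⟨i, j, rfl⟩ | ⟨i, rfl⟩ | ⟨i, j, hij, rfl | rfl⟩ := h
  · rw [Set.range_comp, Equiv.range_eq_univ, Set.image_univ]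
  · apply le_antisymm <;> apply closure_le_of_forall <;> intro r
    · rcases eq_or_ne r i with rfl | hr
      · simpa using neg_mem (mem_cl b r)
      · simpa [Function.update_of_ne hr] using mem_cl b r
    · rcases eq_or_ne r i with rfl | hr
      · simpa using neg_mem (mem_cl (Function.update b r (-(b r))) r)
      · have : b r = Function.update b i (-(b i)) r := by simp [Function.update_of_ne hr]
        rw [this]; exact mem_cl _ r
  · apply le_antisymm <;> apply closure_le_of_forall <;> intro r
    · rcases eq_or_ne r i with rfl | hr
      · simpa using add_mem (mem_cl b r) (mem_cl b j)
      · simpa [Function.update_of_ne hr] using mem_cl b r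
    · rcases eq_or_ne r i with rfl | hr
      · simpa [Function.update_of_ne (Ne.symm hij)] using
          sub_mem (mem_cl (Function.update b r (b r + b j)) r)
            (mem_cl (Function.update b r (b r + b j)) j)
      · have : b r = Function.update b i (b i + b j) r := by simp [Function.update_of_ne hr]
        rw [this]; exact mem_cl _ r
  · apply le_antisymm <;> apply closure_le_of_forall <;> intro r
    · rcases eq_or_ne r i with rfl | hr
      · simpa using sub_mem (mem_cl b r) (mem_cl b j)
      · simpa [Function.update_of_ne hr] using mem_cl b r
    · rcases eq_or_ne r i with rfl | hr
      · simpa [Function.update_of_ne (Ne.symm hij)] using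
          add_mem (mem_cl (Function.update b r (b r - b j)) r)
            (mem_cl (Function.update b r (b r - b j)) j)
      · have : b r = Function.update b i (b i - b j) r := by simp [Function.update_of_ne hr]
        rw [this]; exact mem_cl _ r

lemma closure_chain {b b' : Fin m → A} (h : Relation.ReflTransGen TupleMove b b') :
    AddSubgroup.closure (Set.range b') = AddSubgroup.closure (Set.range b) := by
  induction h with
  | refl => rfl
  | tail _ hstep ih => rw [closure_move hstep, ih]

lemma map_move {B : Type*} [AddCommGroup B] (f : A →+ B) {b b' : Fin m → A} (h : TupleMove b b') :
    TupleMove (f ∘ b) (f ∘ b') := by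
  obtain ⟨i, j, rfl⟩ | ⟨i, rfl⟩ | ⟨i, j, hij, rfl | rfl⟩ := h
  · exact Or.inl ⟨i, j, rfl⟩
  · exact Or.inr (Or.inl ⟨i, by simp [Function.comp_update]⟩)
  · exact Or.inr (Or.inr ⟨i, j, hij, Or.inl (by simp [Function.comp_update])⟩)
  · exact Or.inr (Or.inr ⟨i, j, hij, Or.inr (by simp [Function.comp_update])⟩)

lemma snoc_swap {M : ℕ} (d : Fin M → A) (x : A) (i j : Fin M) :
    (Fin.snoc d x : Fin (M+1) → A) ∘ Equiv.swap i.castSucc j.castSucc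
      = Fin.snoc (d ∘ Equiv.swap i j) x := by
  funext r
  refine Fin.lastCases ?_ (fun r' => ?_) r
  · have h1 : Equiv.swap i.castSucc j.castSucc (Fin.last M) = Fin.last M :=
      Equiv.swap_apply_of_ne_of_ne (Fin.castSucc_lt_last i).ne' (Fin.castSucc_lt_last j).ne'
    simp [h1]
  · have h2 : Equiv.swap i.castSucc j.castSucc r'.castSucc = (Equiv.swap i j r').castSucc := by
      simp [Equiv.swap_apply_def, Fin.castSucc_inj, apply_ite Fin.castSucc]
    simp [h2]

lemma snoc_move {M : ℕ} {d d' : Fin M → A} (x : A) (h : TupleMove d d') :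
    TupleMove (Fin.snoc d x : Fin (M+1) → A) (Fin.snoc d' x) := by
  obtain ⟨i, j, rfl⟩ | ⟨i, rfl⟩ | ⟨i, j, hij, rfl | rfl⟩ := h
  · exact Or.inl ⟨i.castSucc, j.castSucc, (snoc_swap d x i j).symm⟩
  · refine Or.inr (Or.inl ⟨i.castSucc, ?_⟩)
    rw [Fin.snoc_update]; simp
  · refine Or.inr (Or.inr ⟨i.castSucc, j.castSucc, by simpa using hij, Or.inl ?_⟩)
    rw [Fin.snoc_update]; simp
  · refine Or.inr (Or.inr ⟨i.castSucc, j.castSucc, by simpa using hij, Or.inr ?_⟩)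
    rw [Fin.snoc_update]; simp



lemma update_collapse {b : Fin m → A} {i j : Fin m} (hij : i ≠ j) (v : A) (g : A → A → A) :
    Function.update (Function.update b i v) i
      (g (Function.update b i v i) (Function.update b i v j))
    = Function.update b i (g v (b j)) := by
  rw [Function.update_idem, Function.update_self, Function.update_of_ne (Ne.symm hij)]

lemma addmul (b : Fin m → A) {i j : Fin m} (hij : i ≠ j) (t : ℤ) :
    Relation.ReflTransGen TupleMove b (Function.update b i (b i + t • b j)) := by
  induction t using Int.induction_on with
  | zero => simpa using Relation.ReflTransGen.refl
  | succ t ih =>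
      refine ih.tail ?_
      have h : Function.update (Function.update b i (b i + (t:ℤ) • b j)) i
          ((Function.update b i (b i + (t:ℤ) • b j) i) + (Function.update b i (b i + (t:ℤ) • b j) j))
          = Function.update b i (b i + ((t:ℤ)+1) • b j) := by
        rw [update_collapse hij]
        congr 1
        rw [add_smul, one_smul, add_assoc]
      rw [← h]
      exact Or.inr (Or.inr ⟨i, j, hij, Or.inl rfl⟩)
  | pred t ih =>
      refine ih.tail ?_
      have h : Function.update (Function.update b i (b i + (-t:ℤ) • b j)) i
          ((Function.update b i (b i + (-t:ℤ) • b j) i) - (Function.update b i (b i + (-t:ℤ) • b j) j))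
          = Function.update b i (b i + (-t-1:ℤ) • b j) := by
        rw [update_collapse hij]
        congr 1
        rw [sub_smul, one_smul, add_sub_assoc]
      rw [← h]
      exact Or.inr (Or.inr ⟨i, j, hij, Or.inr rfl⟩)

lemma addsum {k : ℕ} (b : Fin m → A) (i : Fin m) (f : Fin k → Fin m)
    (hf : ∀ j, f j ≠ i) (t : Fin k → ℤ) :
    Relation.ReflTransGen TupleMove b
      (Function.update b i (b i + ∑ j, t j • b (f j))) := by
  have H : ∀ s : Finset (Fin k), Relation.ReflTransGen TupleMove b
      (Function.update b i (b i + ∑ j ∈ s, t j • b (f j))) := by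
    intro s
    induction s using Finset.induction_on with
    | empty => simpa using Relation.ReflTransGen.refl
    | @insert x s' hx ih =>
        refine ih.trans ?_
        have key := addmul (Function.update b i (b i + ∑ j ∈ s', t j • b (f j)))
          (Ne.symm (hf x)) (t x)
        have h : Function.update (Function.update b i (b i + ∑ j ∈ s', t j • b (f j))) i
            ((Function.update b i (b i + ∑ j ∈ s', t j • b (f j)) i)
              + t x • (Function.update b i (b i + ∑ j ∈ s', t j • b (f j)) (f x)))
            = Function.update b i (b i + ∑ j ∈ insert x s', t j • b (f j)) := by
          rw [update_collapse (Ne.symm (hf x)) _ (fun u w => u + t x • w)]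
          rw [Finset.sum_insert hx]
          have e : b i + ∑ j ∈ s', t j • b (f j) + t x • b (f x)
              = b i + (t x • b (f x) + ∑ j ∈ s', t j • b (f j)) := by abel
          rw [e]
        rwa [h] at key
  exact H Finset.univ


lemma euclid (φ : A →+ ℤ) : ∀ (N : ℕ) (b : Fin m → A),
    (∑ i, (φ (b i)).natAbs) ≤ N →
    AddSubgroup.closure (Set.range (φ ∘ b)) = ⊤ →
    ∃ (b' : Fin m → A) (k : Fin m), Relation.ReflTransGen TupleMove b b' ∧
      φ (b' k) = 1 ∧ ∀ i, i ≠ k → φ (b' i) = 0 := by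
  intro N
  induction N using Nat.strong_induction_on with
  | _ N IH =>
    intro b hsum hcl
    by_cases hz : ∀ i, φ (b i) = 0
    · exfalso
      have h1 : (1 : ℤ) ∈ AddSubgroup.closure (Set.range (φ ∘ b)) := hcl ▸ AddSubgroup.mem_top 1
      have h2 : AddSubgroup.closure (Set.range (φ ∘ b)) ≤ ⊥ := by
        rw [AddSubgroup.closure_le]
        rintro x ⟨i, rfl⟩
        simp [Function.comp, hz i]
      exact one_ne_zero (AddSubgroup.mem_bot.1 (h2 h1))
    by_cases htwo : ∃ i j : Fin m, i ≠ j ∧ φ (b i) ≠ 0 ∧ φ (b j) ≠ 0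
    · -- euclid step
      have key : ∀ i j : Fin m, i ≠ j → φ (b i) ≠ 0 → φ (b j) ≠ 0 →
          (φ (b j)).natAbs ≤ (φ (b i)).natAbs →
          ∃ (b' : Fin m → A) (k : Fin m), Relation.ReflTransGen TupleMove b b' ∧
            φ (b' k) = 1 ∧ ∀ i, i ≠ k → φ (b' i) = 0 := by
        intro i j hij hx hy hle
        have hcases : ((φ (b i) + φ (b j)).natAbs < (φ (b i)).natAbs)
            ∨ ((φ (b i) - φ (b j)).natAbs < (φ (b i)).natAbs) := by omega
        -- choose v and the move
        obtain ⟨v, hmove, hv⟩ :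
            ∃ v, TupleMove b (Function.update b i v) ∧ (φ v).natAbs < (φ (b i)).natAbs := by
          rcases hcases with h | h
          · exact ⟨b i + b j, Or.inr (Or.inr ⟨i, j, hij, Or.inl rfl⟩), by simpa using h⟩
          · exact ⟨b i - b j, Or.inr (Or.inr ⟨i, j, hij, Or.inr rfl⟩), by simpa using h⟩
        set b₂ := Function.update b i v with hb₂
        have hsum2 : (∑ r, (φ (b₂ r)).natAbs) < N := by
          have e1 : ∑ r, (φ (b₂ r)).natAbs
              = (φ v).natAbs + ∑ r ∈ Finset.univ \ {i}, (φ (b r)).natAbs := by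
            rw [hb₂]
            rw [Finset.sum_eq_add_sum_sdiff_singleton_of_mem (Finset.mem_univ i)]
            simp only [Function.update_self]
            congr 1
            refine Finset.sum_congr rfl ?_
            intro r hr
            have hri : r ≠ i := by
              have := (Finset.mem_sdiff.1 hr).2
              simpa using this
            rw [Function.update_of_ne hri]
          have e2 : ∑ r, (φ (b r)).natAbs
              = (φ (b i)).natAbs + ∑ r ∈ Finset.univ \ {i}, (φ (b r)).natAbs :=
            Finset.sum_eq_add_sum_sdiff_singleton_of_mem (Finset.mem_univ i) _
          have hxpos : 0 < (φ (b i)).natAbs := by omega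
          omega
        have hcl2 : AddSubgroup.closure (Set.range (φ ∘ b₂)) = ⊤ := by
          rw [closure_move (map_move φ hmove)]; exact hcl
        obtain ⟨b', k, chain, h1, h0⟩ := IH _ hsum2 b₂ le_rfl hcl2
        exact ⟨b', k, Relation.ReflTransGen.head hmove chain, h1, h0⟩
      obtain ⟨i, j, hij, hx, hy⟩ := htwo
      rcases le_total (φ (b j)).natAbs (φ (b i)).natAbs with h | h
      · exact key i j hij hx hy h
      · exact key j i (Ne.symm hij) hy hx h
    · -- exactly one nonzero
      push_neg at hz
      obtain ⟨k, hk⟩ := hz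
      push_neg at htwo
      have h0 : ∀ i, i ≠ k → φ (b i) = 0 := by
        intro i hik
        by_contra hne
        exact hk (htwo i k hik hne)
      have h1 : (1 : ℤ) ∈ AddSubgroup.closure (Set.range (φ ∘ b)) := hcl ▸ AddSubgroup.mem_top 1
      have hle : AddSubgroup.closure (Set.range (φ ∘ b)) ≤ AddSubgroup.zmultiples (φ (b k)) := by
        rw [AddSubgroup.closure_le]
        rintro x ⟨i, rfl⟩
        rcases eq_or_ne i k with rfl | hik
        · exact AddSubgroup.mem_zmultiples _
        · have : (φ ∘ b) i = (0 : ℤ) := h0 i hik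
          rw [this]; exact zero_mem _
      obtain ⟨c, hc⟩ := AddSubgroup.mem_zmultiples_iff.1 (hle h1)
      have hunit : φ (b k) = 1 ∨ φ (b k) = -1 := by
        have : c * φ (b k) = 1 := by rw [← hc]; simp [zsmul_eq_mul]
        rcases Int.isUnit_iff.1 (IsUnit.of_mul_eq_one _ (by rw [mul_comm]; exact this)) with h | h
        · exact Or.inl h
        · exact Or.inr h
      rcases hunit with h | h
      · exact ⟨b, k, Relation.ReflTransGen.refl, h, h0⟩
      · refine ⟨Function.update b k (-(b k)), k, Relation.ReflTransGen.single
          (Or.inr (Or.inl ⟨k, rfl⟩)), by simp [h], ?_⟩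
        intro i hik
        rw [Function.update_of_ne hik]
        exact h0 i hik

def snocHom (n : ℕ) : (Fin n → ℤ) →+ (Fin (n+1) → ℤ) where
  toFun y := Fin.snoc y 0
  map_zero' := by
    funext r; refine Fin.lastCases ?_ (fun r' => ?_) r <;> simp
  map_add' y z := by
    funext r; refine Fin.lastCases ?_ (fun r' => ?_) r <;> simp

lemma snocHom_apply (n : ℕ) (y : Fin n → ℤ) : snocHom n y = Fin.snoc y 0 := rfl

lemma main (n : ℕ) : ∀ (m : ℕ) (b : Fin m → (Fin n → ℤ)),
    AddSubgroup.closure (Set.range b) = ⊤ →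
    ∃ (_ : n ≤ m) (b' : Fin m → (Fin n → ℤ)),
      Relation.ReflTransGen TupleMove b b' ∧
      ∀ i : Fin m, b' i = fun j : Fin n => if (i:ℕ) = (j:ℕ) then (1:ℤ) else 0 := by
  induction n with
  | zero =>
      intro m b _
      exact ⟨Nat.zero_le m, b, Relation.ReflTransGen.refl,
        fun i => Subsingleton.elim _ _⟩
  | succ n IH =>
      intro m b hb
      rcases m with _ | m'
      · exfalso
        have h1 : (fun _ => (1:ℤ) : Fin (n+1) → ℤ) ∈ AddSubgroup.closure (Set.range b) :=
          hb ▸ AddSubgroup.mem_top _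
        rw [Set.range_eq_empty, AddSubgroup.closure_empty, AddSubgroup.mem_bot] at h1
        exact one_ne_zero (congrFun h1 (Fin.last n))
      set φ : (Fin (n+1) → ℤ) →+ ℤ := Pi.evalAddMonoidHom (fun _ => ℤ) (Fin.last n) with hφ
      have hclφ : AddSubgroup.closure (Set.range (φ ∘ b)) = ⊤ := by
        have hsurj : Function.Surjective φ := fun z => ⟨fun _ => z, rfl⟩
        have h := AddMonoidHom.map_closure φ (Set.range b)
        rw [hb, AddSubgroup.map_top_of_surjective _ hsurj] at h
        rw [← Set.range_comp] at h
        exact h.symm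
      obtain ⟨b₁, k, chain1, hk1, hk0⟩ := euclid φ _ b le_rfl hclφ
      set b₂ : Fin (m'+1) → (Fin (n+1) → ℤ) := b₁ ∘ Equiv.swap k (Fin.last m') with hb₂
      have move2 : TupleMove b₁ b₂ := Or.inl ⟨k, Fin.last m', rfl⟩
      have chain2 : Relation.ReflTransGen TupleMove b b₂ := chain1.tail move2
      have hlast : φ (b₂ (Fin.last m')) = 1 := by
        rw [hb₂]; simpa [Equiv.swap_apply_right] using hk1
      have hzero : ∀ i : Fin m', φ (b₂ i.castSucc) = 0 := by
        intro i
        rw [hb₂]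
        apply hk0
        intro h
        have := (Equiv.swap k (Fin.last m')).injective
          (h.trans (Equiv.swap_apply_right k (Fin.last m')).symm)
        exact (Fin.castSucc_lt_last i).ne this
      have hcl₂ : AddSubgroup.closure (Set.range b₂) = ⊤ := by
        rw [closure_chain chain2, hb]
      set c : Fin m' → (Fin n → ℤ) := fun i j => b₂ i.castSucc j.castSucc with hc
      have hFc : ∀ i, snocHom n (c i) = b₂ i.castSucc := by
        intro i
        funext r
        refine Fin.lastCases ?_ (fun r' => ?_) r
        · show (Fin.snoc (c i) 0 : Fin (n+1) → ℤ) (Fin.last n) = _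
          rw [Fin.snoc_last]
          exact (hzero i).symm
        · show (Fin.snoc (c i) 0 : Fin (n+1) → ℤ) r'.castSucc = _
          rw [Fin.snoc_castSucc]
      have Finj : Function.Injective (snocHom n) := by
        intro y z h
        funext j
        have := congrFun h j.castSucc
        simpa [snocHom] using this
      have hclc : AddSubgroup.closure (Set.range c) = ⊤ := by
        rw [AddSubgroup.eq_top_iff']
        intro y
        have hx : (snocHom n y) ∈ AddSubgroup.closure (Set.range b₂) :=
          hcl₂ ▸ AddSubgroup.mem_top _
        have hle : AddSubgroup.closure (Set.range b₂) ≤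
            AddSubgroup.map (snocHom n) (AddSubgroup.closure (Set.range c)) ⊔
              AddSubgroup.zmultiples (b₂ (Fin.last m')) := by
          rw [AddSubgroup.closure_le]
          rintro x ⟨r, rfl⟩
          refine Fin.lastCases ?_ (fun i => ?_) r
          · exact AddSubgroup.mem_sup_right (AddSubgroup.mem_zmultiples _)
          · exact AddSubgroup.mem_sup_left
              ⟨c i, AddSubgroup.subset_closure ⟨i, rfl⟩, hFc i⟩
        obtain ⟨p, hp, q, hq, hpq⟩ := AddSubgroup.mem_sup.1 (hle hx)
        obtain ⟨p₀, hp₀, rfl⟩ := hp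
        obtain ⟨t, rfl⟩ := AddSubgroup.mem_zmultiples_iff.1 hq
        have h1 := congrArg φ hpq
        rw [map_add, map_zsmul, hlast] at h1
        have h2 : φ (snocHom n p₀) = 0 := by simp [snocHom, hφ]
        have h3 : φ (snocHom n y) = 0 := by simp [snocHom, hφ]
        rw [h2, h3] at h1
        have ht : t = 0 := by simpa using h1
        rw [ht, zero_smul, add_zero] at hpq
        exact (Finj hpq) ▸ hp₀
      obtain ⟨hnm', c', chainc, hc'⟩ := IH m' c hclc
      have chainF : Relation.ReflTransGen TupleMove
          (Fin.snoc (⇑(snocHom n) ∘ c) (b₂ (Fin.last m')) : Fin (m'+1) → (Fin (n+1) → ℤ))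
          (Fin.snoc (⇑(snocHom n) ∘ c') (b₂ (Fin.last m'))) := by
        refine Relation.ReflTransGen.lift
          (fun d => (Fin.snoc (⇑(snocHom n) ∘ d) (b₂ (Fin.last m')) : Fin (m'+1) → (Fin (n+1) → ℤ)))
          (fun u v h => ?_) _ _ chainc
        exact snoc_move _ (map_move (snocHom n) h)
      have eq_start : (Fin.snoc (⇑(snocHom n) ∘ c) (b₂ (Fin.last m')) : Fin (m'+1) → (Fin (n+1) → ℤ)) = b₂ := by
        funext r
        refine Fin.lastCases ?_ (fun i => ?_) r
        · rw [Fin.snoc_last]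
        · rw [Fin.snoc_castSucc]
          exact hFc i
      set b₃ : Fin (m'+1) → (Fin (n+1) → ℤ) :=
        Fin.snoc (⇑(snocHom n) ∘ c') (b₂ (Fin.last m')) with hb₃
      have chain3 : Relation.ReflTransGen TupleMove b b₃ :=
        chain2.trans (eq_start ▸ chainF)
      have rowfact : ∀ i : Fin m',
          b₃ i.castSucc = fun j : Fin (n+1) => if (i:ℕ) = (j:ℕ) ∧ (i:ℕ) ≠ n then 1 else 0 := by
        intro i
        rw [hb₃]
        rw [Fin.snoc_castSucc]
        show snocHom n (c' i) = _
        rw [hc' i, snocHom_apply]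
        funext j
        refine Fin.lastCases ?_ (fun j' => ?_) j
        · rw [Fin.snoc_last, if_neg]
          rintro ⟨h1, h2⟩
          exact h2 (by simpa using h1)
        · rw [Fin.snoc_castSucc]
          have hj' := j'.isLt
          by_cases hcnd : (i:ℕ) = (j':ℕ)
          · rw [if_pos hcnd, if_pos ⟨by simpa using hcnd, by omega⟩]
          · rw [if_neg hcnd, if_neg (fun hcc => hcnd (by simpa using hcc.1))]
      have hb₃last : b₃ (Fin.last m') = b₂ (Fin.last m') := by
        rw [hb₃, Fin.snoc_last]
      -- the cleaning step
      set f : Fin n → Fin (m'+1) := fun j => (Fin.castLE hnm' j).castSucc with hf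
      have hfne : ∀ j, f j ≠ Fin.last m' := fun j => (Fin.castSucc_lt_last _).ne
      set t : Fin n → ℤ := fun j => -(b₃ (Fin.last m') j.castSucc) with htdef
      have chain4 := addsum b₃ (Fin.last m') f hfne t
      have hrow : ∀ j : Fin n, b₃ (f j) = fun q : Fin (n+1) => if (j:ℕ) = (q:ℕ) then 1 else 0 := by
        intro j
        have h := rowfact (Fin.castLE hnm' j)
        rw [show ((Fin.castLE hnm' j).castSucc) = f j from rfl] at h
        rw [h]
        funext q
        have hval : ((Fin.castLE hnm' j : Fin m') : ℕ) = (j:ℕ) := rfl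
        have hj := j.isLt
        by_cases hcnd : (j:ℕ) = (q:ℕ)
        · rw [if_pos ⟨by rw [hval]; exact hcnd, by rw [hval]; omega⟩, if_pos hcnd]
        · rw [if_neg (fun hcc => hcnd (by rw [hval] at hcc; exact hcc.1)), if_neg hcnd]
      have hv : b₃ (Fin.last m') + ∑ j, t j • b₃ (f j)
          = fun q : Fin (n+1) => if n = (q:ℕ) then 1 else 0 := by
        funext q
        rw [Pi.add_apply, Finset.sum_apply]
        refine Fin.lastCases ?_ (fun q' => ?_) q
        · have hsum0 : ∑ j : Fin n, (t j • b₃ (f j)) (Fin.last n) = 0 := by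
            refine Finset.sum_eq_zero fun j _ => ?_
            rw [Pi.smul_apply, hrow j]
            have hj := j.isLt
            show t j • (if (j:ℕ) = ((Fin.last n : Fin (n+1)):ℕ) then (1:ℤ) else 0) = 0
            rw [if_neg (by simp; omega)]
            simp
          rw [hsum0, add_zero]
          have hl : b₃ (Fin.last m') (Fin.last n) = 1 := by rw [hb₃last]; exact hlast
          rw [hl, if_pos (by simp)]
        · have hterm : ∀ j : Fin n, (t j • b₃ (f j)) q'.castSucc
              = if q' = j then -(b₃ (Fin.last m') q'.castSucc) else 0 := by
            intro j
            rw [Pi.smul_apply, hrow j]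
            show t j • (if (j:ℕ) = ((q'.castSucc : Fin (n+1)):ℕ) then (1:ℤ) else 0) = _
            by_cases hc : q' = j
            · subst hc
              rw [if_pos (by simp), if_pos rfl]
              simp [htdef]
            · rw [if_neg (by simpa [Fin.ext_iff, eq_comm] using hc), if_neg hc]
              simp
          rw [Finset.sum_congr rfl (fun j _ => hterm j)]
          rw [Finset.sum_ite_eq]
          have hq' := q'.isLt
          simp only [Finset.mem_univ, if_true]
          rw [if_neg (by simp; omega)]
          abel
      have chain4' : Relation.ReflTransGen TupleMove b₃
          (Function.update b₃ (Fin.last m') (fun q : Fin (n+1) => if n = (q:ℕ) then 1 else 0)) := by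
        rw [← hv]; exact chain4
      set b₄ : Fin (m'+1) → (Fin (n+1) → ℤ) :=
        Function.update b₃ (Fin.last m') (fun q : Fin (n+1) => if n = (q:ℕ) then 1 else 0) with hb₄
      set p : Fin (m'+1) := ⟨n, Nat.lt_succ_of_le hnm'⟩ with hp
      set b₅ : Fin (m'+1) → (Fin (n+1) → ℤ) := b₄ ∘ Equiv.swap p (Fin.last m') with hb₅
      have move5 : TupleMove b₄ b₅ := Or.inl ⟨p, Fin.last m', rfl⟩
      have chain5 : Relation.ReflTransGen TupleMove b b₅ :=
        (chain3.trans chain4').tail move5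
      refine ⟨Nat.succ_le_succ hnm', b₅, chain5, ?_⟩
      intro q
      by_cases hq : q = p
      · subst hq
        rw [hb₅]
        show b₄ (Equiv.swap p (Fin.last m') p) = _
        rw [Equiv.swap_apply_left, hb₄, Function.update_self]
      by_cases hq2 : q = Fin.last m'
      · subst hq2
        rw [hb₅]
        show b₄ (Equiv.swap p (Fin.last m') (Fin.last m')) = _
        rw [Equiv.swap_apply_right, hb₄, Function.update_of_ne (fun h => hq h.symm)]
        have hn : n < m' := by
          rcases lt_or_eq_of_le hnm' with h | h
          · exact h
          · exact absurd (Fin.ext (by simp [hp, ← h]) : Fin.last m' = p) hq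
        have hp' : p = (⟨n, hn⟩ : Fin m').castSucc := Fin.ext rfl
        rw [hp', rowfact ⟨n, hn⟩]
        funext j
        have hj := j.isLt
        have hcond1 : ¬((n:ℕ) = (j:ℕ) ∧ (n:ℕ) ≠ n) := by rintro ⟨_, h2⟩; exact h2 rfl
        have hcond2 : ¬((Fin.last m' : Fin (m'+1)) : ℕ) = (j:ℕ) := by
          simp only [Fin.val_last]; omega
        rw [if_neg hcond1, if_neg hcond2]
      · rw [hb₅]
        show b₄ (Equiv.swap p (Fin.last m') q) = _
        rw [Equiv.swap_apply_of_ne_of_ne hq hq2, hb₄, Function.update_of_ne hq2]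
        have h := rowfact (q.castPred hq2)
        simp only [Fin.castSucc_castPred, Fin.coe_castPred] at h
        rw [h]
        have hqn : (q:ℕ) ≠ n := fun hc => hq (Fin.ext (by rw [hc]))
        funext j
        by_cases hc : (q:ℕ) = (j:ℕ)
        · rw [if_pos hc]; exact if_pos ⟨hc, hqn⟩
        · rw [if_neg hc]; exact if_neg (fun hcc => hc hcc.1)

end TM

/-- If `A` is free abelian of rank `n` with basis `a` and `b₁, …, b_m` generate `A`,
then a finite sequence of swaps, negations and additions transforms `(b₁, …, b_m)` into
a tuple whose first `n` entries are the basis and whose remaining entries vanish. -/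
theorem stmt_13 {n m : ℕ} {A : Type*} [AddCommGroup A]
    (a : Module.Basis (Fin n) ℤ A) (b : Fin m → A)
    (hb : AddSubgroup.closure (Set.range b) = ⊤) :
    ∃ (hmn : n ≤ m) (b' : Fin m → A),
      Relation.ReflTransGen TupleMove b b' ∧
      (∀ i : Fin n, b' (Fin.castLE hmn i) = a i) ∧
      (∀ j : Fin m, n ≤ (j : ℕ) → b' j = 0) := by
  classical
  letI : Module ℤ A := inferInstance
  set E : A ≃+ (Fin n → ℤ) := a.equivFun.toAddEquiv with hE
  have hd : AddSubgroup.closure (Set.range (⇑E ∘ b)) = ⊤ := by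
    have h := AddMonoidHom.map_closure E.toAddMonoidHom (Set.range b)
    rw [hb, AddSubgroup.map_top_of_surjective _ E.surjective] at h
    rw [← Set.range_comp] at h
    exact h.symm
  obtain ⟨hmn, d', chain', hfin⟩ := TM.main n m (⇑E ∘ b) hd
  refine ⟨hmn, ⇑E.symm ∘ d', ?_, ?_, ?_⟩
  · have hlift := Relation.ReflTransGen.lift (fun d => ⇑E.symm ∘ d)
      (fun u v h => TM.map_move E.symm.toAddMonoidHom h) _ _ chain'
    have hstart : (fun d : Fin m → (Fin n → ℤ) => ⇑E.symm ∘ d) (⇑E ∘ b) = b := by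
      funext i; simp
    simp only [Function.onFun] at hlift
    rwa [show ⇑E.symm ∘ (⇑E ∘ b) = b from hstart] at hlift
  · intro i
    show E.symm (d' (Fin.castLE hmn i)) = a i
    rw [hfin (Fin.castLE hmn i)]
    have hval : ((Fin.castLE hmn i : Fin m) : ℕ) = (i : ℕ) := rfl
    have hfun : (fun j : Fin n => if ((Fin.castLE hmn i : Fin m) : ℕ) = (j:ℕ) then (1:ℤ) else 0)
        = fun j : Fin n => if i = j then (1:ℤ) else 0 := by
      funext j
      rw [hval]
      by_cases hc : i = j
      · rw [if_pos (by rw [hc]), if_pos hc]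
      · rw [if_neg (fun hcc => hc (Fin.ext hcc)), if_neg hc]
    rw [hfun]
    have : E.symm (fun j : Fin n => if i = j then (1:ℤ) else 0)
        = a.equivFun.symm (fun j : Fin n => if i = j then (1:ℤ) else 0) := rfl
    rw [this, Module.Basis.equivFun_symm_apply]
    simp [ite_smul]
  · intro j hj
    show E.symm (d' j) = 0
    rw [hfin j]
    have hfun : (fun q : Fin n => if (j:ℕ) = (q:ℕ) then (1:ℤ) else 0) = 0 := by
      funext q
      have := q.isLt
      rw [if_neg (by omega)]
      rfl
    rw [hfun, map_zero]
end
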